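/- With 𝔤_− and 𝔤₀ as in the presymplectic prolongation setup (ω ≠ 0), the k-th Tanaka prolongation 𝔤_k vanishes for all k ≥ 3. -/
import Mathlib


open scoped TensorProduct

noncomputable section

variable (U : Type*) [AddCommGroup U] [Module ℂ U]
variable (Q : Type*) [AddCommGroup Q] [Module ℂ Q]

/-- Relations defining `Sym² U` as a quotient of `U ⊗ U`. -/
def symRel : Submodule ℂ (U ⊗[ℂ] U) :=
  Submodule.span ℂ {x | ∃ u v : U, x = u ⊗ₜ[ℂ] v - v ⊗ₜ[ℂ] u}

/-- The symmetric square `Sym² U`. -/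
def SymSq := (U ⊗[ℂ] U) ⧸ symRel U

instance : AddCommGroup (SymSq U) := by unfold SymSq; infer_instance
instance : Module ℂ (SymSq U) := by unfold SymSq; infer_instance

/-- The symmetric product `u ⊙ v ∈ Sym² U`. -/
def symPr (u v : U) : SymSq U := Submodule.Quotient.mk (u ⊗ₜ[ℂ] v)

private lemma symsq_map_eq_zero {W : Type*} [AddCommGroup W] [Module ℂ W]
    (f : SymSq U →ₗ[ℂ] W) (h : ∀ u v : U, f (symPr U u v) = 0) : f = 0 := by
  have h2 : f.comp (symRel U).mkQ = 0 := TensorProduct.ext' fun u v => h u v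
  ext s
  obtain ⟨x, rfl⟩ := (symRel U).mkQ_surjective s
  exact DFunLike.congr_fun h2 x

private lemma mem_span_of_smul {V : Type*} [AddCommGroup V] [Module ℂ V]
    {x y : V} {a b : ℂ} (hb : b ≠ 0) (h : a • x + b • y = 0) :
    y ∈ Submodule.span ℂ {x} := by
  have hy : y = (-(b⁻¹ * a)) • x := by
    have h1 : b • y = -(a • x) := by
      rw [eq_neg_iff_add_eq_zero, add_comm]; exact h
    calc y = b⁻¹ • (b • y) := by rw [smul_smul, inv_mul_cancel₀ hb, one_smul]
    _ = b⁻¹ • (-(a • x)) := by rw [h1]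
    _ = (-(b⁻¹ * a)) • x := by rw [smul_neg, smul_smul, neg_smul]
  rw [hy]
  exact Submodule.smul_mem _ _ (Submodule.mem_span_singleton_self x)

private lemma coeff_eq_zero {V : Type*} [AddCommGroup V] [Module ℂ V]
    {v w : V} (h : w ∉ Submodule.span ℂ {v}) {c d : ℂ}
    (heq : c • w + d • v = 0) : c = 0 := by
  by_contra hc
  exact h (mem_span_of_smul hc (by rw [add_comm]; exact heq))

/- STATEMENT 12: the k-th Tanaka prolongation 𝔤_k of (𝔤₀, 𝔤₋) vanishes for
all k ≥ 3.  Here 𝔤₋₁ = U⊗Q, 𝔤₋₂ = Sym²U with bracket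
[u₁⊗q₁,u₂⊗q₂] = ω(q₁,q₂) u₁⊙u₂, 𝔤₀ = 𝔤𝔩(U) ⊕ 𝔰𝔭_ω(Q), and (as in the paper)
𝔤₁ ≅ Hom(U,Q) (acting by h·(v⊙w) = ½(w⊗h(v)+v⊗h(w)),
h·(w⊗p) = h^U_{w⊗p} + h^Q_{w⊗p}) and 𝔤₂ ≅ Sym²U* (symmetric bilinear forms B,
acting by B·(v⊙w) = B_{v⊙w} ∈ 𝔤𝔩(U), B·(w⊗p) = B_{w⊗p} ∈ Hom(U,Q) = 𝔤₁,
B_{v⊙w}(u) = ½B(u,v)w + ½B(u,w)v, B_{w⊗p}(u) = B(u,w)p).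

An element of 𝔤₃ is a pair (φ₂ : 𝔤₋₂ →ₗ 𝔤₁, φ₁ : 𝔤₋₁ →ₗ 𝔤₂) subject to the
prolongation identities; the first conjunct says any such pair vanishes,
i.e. 𝔤₃ = 0.  The second conjunct expresses the vanishing of 𝔤₄ (whose
𝔤₋₁-component lands in 𝔤₃ = 0): a map ψ : 𝔤₋₂ →ₗ 𝔤₂ whose induced products
with 𝔤₋₁ vanish must be zero.  The vanishing of 𝔤_k for k ≥ 5 is automatic
from 𝔤₃ = 𝔤₄ = 0. -/
theorem higher_prolongations_vanish
    (hU : 2 ≤ Module.finrank ℂ U)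
    (ω : Q →ₗ[ℂ] Q →ₗ[ℂ] ℂ) (halt : ∀ q : Q, ω q q = 0) (hne : ω ≠ 0)
    (B : (U ⊗[ℂ] Q) →ₗ[ℂ] (U ⊗[ℂ] Q) →ₗ[ℂ] SymSq U)
    (hB : ∀ (u₁ u₂ : U) (q₁ q₂ : Q),
      B (u₁ ⊗ₜ[ℂ] q₁) (u₂ ⊗ₜ[ℂ] q₂) = ω q₁ q₂ • symPr U u₁ u₂) :
    -- 𝔤₃ = 0 :
    (∀ (φ₂ : SymSq U →ₗ[ℂ] (U →ₗ[ℂ] Q))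
        (φ₁ : (U ⊗[ℂ] Q) →ₗ[ℂ] (U →ₗ[ℂ] U →ₗ[ℂ] ℂ)),
      -- φ₁ takes values in symmetric bilinear forms (𝔤₂ = Sym²U*),
      (∀ (x : U ⊗[ℂ] Q) (u v : U), φ₁ x u v = φ₁ x v u) →
      -- prolongation identity on pairs from 𝔤₋₁ × 𝔤₋₁,
      (∀ (w₁ : U) (q₁ : Q) (w₂ : U) (q₂ : Q) (u : U),
        φ₂ (B (w₁ ⊗ₜ[ℂ] q₁) (w₂ ⊗ₜ[ℂ] q₂)) u
          = (φ₁ (w₁ ⊗ₜ[ℂ] q₁) u w₂) • q₂ - (φ₁ (w₂ ⊗ₜ[ℂ] q₂) u w₁) • q₁) →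
      -- prolongation identity on pairs from 𝔤₋₁ × 𝔤₋₂ (𝔤𝔩(U)-components),
      (∀ (u : U) (q : Q) (w w' : U) (t : U),
        (2⁻¹ * φ₁ (u ⊗ₜ[ℂ] q) t w) • w' + (2⁻¹ * φ₁ (u ⊗ₜ[ℂ] q) t w') • w
          = (2⁻¹ * ω (φ₂ (symPr U w w') t) q) • u) →
      -- prolongation identity on pairs from 𝔤₋₁ × 𝔤₋₂ (𝔰𝔭_ω(Q)-components),
      (∀ (u : U) (q : Q) (w w' : U) (p : Q),
        (2⁻¹ * ω (φ₂ (symPr U w w') u) p) • q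
            + (2⁻¹ * ω q p) • (φ₂ (symPr U w w') u) = 0) →
      φ₂ = 0 ∧ φ₁ = 0) ∧
    -- 𝔤₄ = 0 (given 𝔤₃ = 0) :
    (∀ ψ : SymSq U →ₗ[ℂ] (U →ₗ[ℂ] U →ₗ[ℂ] ℂ),
      (∀ (s : SymSq U) (u v : U), ψ s u v = ψ s v u) →
      (∀ (w w' : U) (u : U) (p : Q) (t : U),
        (ψ (symPr U w w') t u) • p = (0 : Q)) →
      ψ = 0) := by
  have hskew : ∀ q p : Q, ω p q = -ω q p := by
    intro q p
    have h := halt (q + p)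
    simp only [map_add, LinearMap.add_apply, halt] at h
    linear_combination h
  obtain ⟨q₀, p₀, h0⟩ : ∃ q p : Q, ω q p ≠ 0 := by
    by_contra h; push_neg at h
    exact hne (by ext q p; simpa using h q p)
  have hq0span : p₀ ∉ Submodule.span ℂ {q₀} := by
    intro hmem
    obtain ⟨c, rfl⟩ := Submodule.mem_span_singleton.mp hmem
    simp [halt] at h0
  have hwspan : ∀ w : U, ∃ w' : U, w' ∉ Submodule.span ℂ {w} := by
    intro w
    by_contra h; push_neg at h
    have htop : Submodule.span ℂ {w} = ⊤ := Submodule.eq_top_iff'.mpr h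
    have hle : Module.finrank ℂ ↥(Submodule.span ℂ {w}) ≤ 1 := by
      by_cases hw : w = 0
      · subst hw
        rw [Submodule.span_zero_singleton]
        simp
      · exact le_of_eq (finrank_span_singleton hw)
    rw [htop, finrank_top] at hle
    omega
  constructor
  · intro φ₂ φ₁ _hsym _h11 h12gl h12sp
    have hφ₂0 : ∀ (w w' u : U), φ₂ (symPr U w w') u = 0 := by
      intro w w' u
      have hb : (2⁻¹ * ω q₀ p₀ : ℂ) ≠ 0 := mul_ne_zero (by norm_num) h0
      have hb' : (2⁻¹ * ω p₀ q₀ : ℂ) ≠ 0 := by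
        rw [hskew]; simpa using h0
      obtain ⟨a, ha⟩ := Submodule.mem_span_singleton.mp
        (mem_span_of_smul hb (h12sp u q₀ w w' p₀))
      obtain ⟨b', hb2⟩ := Submodule.mem_span_singleton.mp
        (mem_span_of_smul hb' (h12sp u p₀ w w' q₀))
      have hcomb : b' • p₀ + (-a) • q₀ = 0 := by
        rw [neg_smul, hb2, ha]
        exact add_neg_cancel _
      have : b' = 0 := coeff_eq_zero hq0span hcomb
      rw [← hb2, this, zero_smul]
    have hφ₂ : φ₂ = 0 :=
      symsq_map_eq_zero U φ₂ fun w w' => LinearMap.ext fun u => hφ₂0 w w' u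
    refine ⟨hφ₂, ?_⟩
    have hφ₁0 : ∀ (u : U) (q : Q) (t w : U), φ₁ (u ⊗ₜ[ℂ] q) t w = 0 := by
      intro u q t w
      obtain ⟨w', hw'⟩ := hwspan w
      have he := h12gl u q w w' t
      rw [hφ₂0 w w' t] at he
      simp only [map_zero, LinearMap.zero_apply, mul_zero, zero_smul] at he
      have hc : (2⁻¹ * φ₁ (u ⊗ₜ[ℂ] q) t w : ℂ) = 0 := coeff_eq_zero hw' he
      have h2 : (2⁻¹ : ℂ) ≠ 0 := by norm_num
      exact (mul_eq_zero.mp hc).resolve_left h2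
    exact TensorProduct.ext' fun u q =>
      LinearMap.ext fun t => LinearMap.ext fun w => hφ₁0 u q t w
  · intro ψ _hsym hvan
    have hp₀ : p₀ ≠ 0 := by
      intro h; rw [h] at h0; simp at h0
    refine symsq_map_eq_zero U ψ fun w w' =>
      LinearMap.ext fun t => LinearMap.ext fun u => ?_
    have := hvan w w' u p₀ t
    rcases smul_eq_zero.mp this with h | h
    · simpa using h
    · exact absurd h hp₀
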